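/- Let (x_m) be a sequence of positive reals with x_m → ∞ and γ(x_m) →cir λ for some λ ∈ (c⁻¹,1]. Then for every y > 0, γ(x_m · y) →cir h_λ(y), where h_λ(y) = λy/c^{⌈log_c(λy)⌉}. -/

import Mathlib

open Set Filter Topology Real

/-- Circular convergence of a sequence `u` to `lam ∈ (c⁻¹, 1]`: either `lam ∈ (c⁻¹,1)` and
`u → lam` in the usual sense, or `lam = 1` and every limit point of `u` lies in `{c⁻¹, 1}`. -/
def CirTendsto (c : ℝ) (u : ℕ → ℝ) (lam : ℝ) : Prop :=
  (lam ∈ Set.Ioo c⁻¹ 1 ∧ Filter.Tendsto u Filter.atTop (nhds lam)) ∨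
  (lam = 1 ∧ ∀ L : ℝ, MapClusterPt L Filter.atTop u → L = c⁻¹ ∨ L = 1)

/-- `h_lam(y) = lam·y / c^{⌈log_c (lam·y)⌉}`. -/
noncomputable def hFun (c lam y : ℝ) : ℝ :=
  lam * y / c ^ (⌈Real.log (lam * y) / Real.log c⌉ : ℤ)

section Aux

variable {c : ℝ} {k : ℕ → ℕ}

lemma kpos (hk : StrictMono k) (hk1 : 1 ≤ k 0) (n : ℕ) : (0:ℝ) < k n := by
  have h : 1 ≤ k n := le_trans hk1 (hk.monotone (Nat.zero_le n))
  exact_mod_cast Nat.lt_of_lt_of_le Nat.zero_lt_one h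

lemma ktop (hk : StrictMono k) : Filter.Tendsto (fun n => ((k n : ℕ) : ℝ)) atTop atTop :=
  tendsto_natCast_atTop_atTop.comp hk.tendsto_atTop

lemma ratio (hk : StrictMono k) (hk1 : 1 ≤ k 0)
    (hkc : Filter.Tendsto (fun n => ((k (n + 1) : ℝ) / (k n : ℝ))) atTop (nhds c)) (a : ℕ) :
    Filter.Tendsto (fun n => ((k (n + a) : ℝ) / (k n : ℝ))) atTop (nhds (c ^ a)) := by
  induction a with
  | zero =>
    have h : (fun n => ((k (n + 0) : ℝ) / (k n : ℝ))) = fun _ => (1:ℝ) := by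
      funext n; rw [Nat.add_zero, div_self (kpos hk hk1 n).ne']
    rw [h, pow_zero]; exact tendsto_const_nhds
  | succ a ih =>
    have h1 : Filter.Tendsto (fun n => ((k (n + a + 1) : ℝ) / (k (n + a) : ℝ))) atTop (nhds c) :=
      hkc.comp (tendsto_add_atTop_nat a)
    have h2 := h1.mul ih
    have heq : ∀ n, ((k (n + a + 1) : ℝ) / (k (n + a) : ℝ)) * ((k (n + a) : ℝ) / (k n : ℝ))
        = (k (n + (a + 1)) : ℝ) / (k n : ℝ) := by
      intro n
      have hna := (kpos hk hk1 (n + a)).ne'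
      have hn := (kpos hk hk1 n).ne'
      rw [show n + (a + 1) = n + a + 1 by ring]
      field_simp
    have : c * c ^ a = c ^ (a + 1) := by ring
    rw [← this]
    exact h2.congr heq

lemma ratio2 (hc : 1 < c) (hk : StrictMono k) (hk1 : 1 ≤ k 0)
    (hkc : Filter.Tendsto (fun n => ((k (n + 1) : ℝ) / (k n : ℝ))) atTop (nhds c)) (a b : ℕ) :
    Filter.Tendsto (fun n => ((k (n + a) : ℝ) / (k (n + b) : ℝ)))
      atTop (nhds (c ^ a / c ^ b)) := by
  have hc0 : (0:ℝ) < c := lt_trans one_pos hc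
  have hb : (c:ℝ) ^ b ≠ 0 := by positivity
  have h := (ratio hk hk1 hkc a).div (ratio hk hk1 hkc b) hb
  refine h.congr fun n => ?_
  have h1 := (kpos hk hk1 n).ne'
  have h2 := (kpos hk hk1 (n + a)).ne'
  have h3 := (kpos hk hk1 (n + b)).ne'
  rw [Pi.div_apply]
  field_simp

lemma exists_le_k (hk : StrictMono k) (x : ℝ) : ∃ n, x ≤ ((k (n + 1) : ℕ) : ℝ) := by
  obtain ⟨n, hn⟩ := ((ktop hk).eventually_ge_atTop x).exists
  exact ⟨n, le_trans hn (by exact_mod_cast (hk.monotone (Nat.le_succ n)))⟩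

/-- Index of `x`: least `n` such that `x ≤ k (n+1)`. -/
noncomputable def idx (hk : StrictMono k) (x : ℝ) : ℕ := Nat.find (exists_le_k hk x)

lemma le_idx (hk : StrictMono k) (x : ℝ) : x ≤ ((k (idx hk x + 1) : ℕ) : ℝ) :=
  Nat.find_spec (exists_le_k hk x)

lemma idx_lt (hk : StrictMono k) (x : ℝ) (hx : ((k 0 : ℕ) : ℝ) < x) :
    ((k (idx hk x) : ℕ) : ℝ) < x := by
  rcases Nat.eq_zero_or_pos (idx hk x) with h | h
  · rw [h]; exact hx
  · obtain ⟨m, hm⟩ := Nat.exists_eq_succ_of_ne_zero h.ne'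
    have := Nat.find_min (exists_le_k hk x) (show m < idx hk x by omega)
    push_neg at this
    rw [hm]; exact this

lemma gamma_eq {γ : ℝ → ℝ}
    (hγ : ∀ x : ℝ, ∀ n : ℕ, (k n : ℝ) < x → x ≤ (k (n + 1) : ℝ) → γ x = x / (k (n + 1) : ℝ))
    (hk : StrictMono k) (x : ℝ) (hx : ((k 0 : ℕ) : ℝ) < x) :
    γ x = x / (k (idx hk x + 1) : ℝ) :=
  hγ x (idx hk x) (idx_lt hk x hx) (le_idx hk x)

lemma idx_tendsto (hk : StrictMono k) (x : ℕ → ℝ) (hx : Filter.Tendsto x atTop atTop) :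
    Filter.Tendsto (fun m => idx hk (x m)) atTop atTop := by
  rw [tendsto_atTop]
  intro M
  filter_upwards [hx.eventually_gt_atTop ((k M : ℕ) : ℝ)] with m hm
  have h1 : ((k M : ℕ) : ℝ) < ((k (idx hk (x m) + 1) : ℕ) : ℝ) :=
    lt_of_lt_of_le hm (le_idx hk (x m))
  have h2 : k M < k (idx hk (x m) + 1) := by exact_mod_cast h1
  have := hk.lt_iff_lt.mp h2
  omega

lemma gamma_mem {γ : ℝ → ℝ}
    (hγ : ∀ x : ℝ, ∀ n : ℕ, (k n : ℝ) < x → x ≤ (k (n + 1) : ℝ) → γ x = x / (k (n + 1) : ℝ))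
    (hγ0 : ∀ x : ℝ, 0 < x → x ≤ (k 0 : ℝ) → γ x = x / (k 0 : ℝ))
    (hk : StrictMono k) (hk1 : 1 ≤ k 0) (x : ℝ) (hx : 0 < x) : γ x ∈ Set.Icc (0:ℝ) 1 := by
  by_cases h : x ≤ ((k 0 : ℕ) : ℝ)
  · rw [hγ0 x hx h]
    constructor
    · positivity
    · exact div_le_one_of_le₀ h (kpos hk hk1 0).le
  · push_neg at h
    rw [gamma_eq hγ hk x h]
    constructor
    · positivity
    · exact div_le_one_of_le₀ (le_idx hk x) (kpos hk hk1 _).le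

/-- The workhorse dichotomy lemma. -/
lemma dichotomy {γ : ℝ → ℝ} (hc : 1 < c) (hk : StrictMono k) (hk1 : 1 ≤ k 0)
    (hkc : Filter.Tendsto (fun n => ((k (n + 1) : ℝ) / (k n : ℝ))) atTop (nhds c))
    (hγ : ∀ x : ℝ, ∀ n : ℕ, (k n : ℝ) < x → x ≤ (k (n + 1) : ℝ) → γ x = x / (k (n + 1) : ℝ))
    (x : ℕ → ℝ) (hx : Filter.Tendsto x atTop atTop)
    (μ y : ℝ) (hy : 0 < y) (hμ : 0 < μ)
    (hγx : Filter.Tendsto (fun m => γ (x m)) atTop (nhds μ))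
    (j : ℤ) (h1 : c ^ (j - 1) < μ * y) (h2 : μ * y ≤ c ^ j) :
    ∃ r s : ℕ → ℝ, Filter.Tendsto r atTop (nhds (μ * y / c ^ j)) ∧
      Filter.Tendsto s atTop (nhds (μ * y / c ^ (j + 1))) ∧
      (∀ᶠ m in atTop, γ (x m * y) = r m ∨ γ (x m * y) = s m) ∧
      (μ * y < c ^ j → ∀ᶠ m in atTop, γ (x m * y) = r m) := by
  have hc0 : (0:ℝ) < c := lt_trans one_pos hc
  have hcne : c ≠ 0 := hc0.ne'
  -- integer bookkeeping
  set b : ℕ := (1 - j).toNat + 1 with hbdef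
  have hble : (1:ℤ) - j ≤ ((1 - j).toNat : ℤ) := Int.self_le_toNat _
  have hanonneg : (0:ℤ) ≤ j + (b:ℤ) - 1 := by push_cast [hbdef]; omega
  set a : ℕ := (j + (b:ℤ) - 1).toNat with hadef
  have ha : (a:ℤ) = j + (b:ℤ) - 1 := Int.toNat_of_nonneg hanonneg
  -- zpow/pow conversions
  have hzp : ∀ i : ℕ, (c:ℝ) ^ i / c ^ (b + 1) = c ^ ((i:ℤ) - ((b:ℤ) + 1)) := by
    intro i
    rw [← zpow_natCast c i, ← zpow_natCast c (b + 1), ← zpow_sub₀ hcne]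
    norm_cast
  have e1 : (c:ℝ) ^ (a + 1) / c ^ (b + 1) = c ^ (j - 1) := by
    rw [hzp]; congr 1; omega
  have e2 : (c:ℝ) ^ (a + 2) / c ^ (b + 1) = c ^ j := by
    rw [hzp]; congr 1; omega
  have e3 : (c:ℝ) ^ (a + 3) / c ^ (b + 1) = c ^ (j + 1) := by
    rw [hzp]; congr 1; omega
  -- index sequences
  set n : ℕ → ℕ := fun m => idx hk (x m) with hndef
  have hn : Filter.Tendsto n atTop atTop := idx_tendsto hk x hx
  set p : ℕ → ℕ := fun m => n m - b with hpdef
  have hp : Filter.Tendsto p atTop atTop := (tendsto_sub_atTop_nat b).comp hn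
  have hev_b : ∀ᶠ m in atTop, b ≤ n m := hn.eventually_ge_atTop b
  -- the normalized sequence u
  set u : ℕ → ℝ := fun m => x m * y / (k (n m + 1) : ℝ) with hudef
  have hu : Filter.Tendsto u atTop (nhds (μ * y)) := by
    have := hγx.mul_const y
    refine this.congr' ?_
    filter_upwards [hx.eventually_gt_atTop ((k 0 : ℕ) : ℝ)] with m hm
    rw [gamma_eq hγ hk (x m) hm]
    simp only [hudef]
    ring
  -- ratio sequences
  set R : ℕ → ℕ → ℝ := fun i m => ((k (p m + i) : ℕ) : ℝ) / ((k (p m + (b + 1)) : ℕ) : ℝ)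
    with hRdef
  have hR : ∀ i, Filter.Tendsto (R i) atTop (nhds ((c:ℝ) ^ i / c ^ (b + 1))) := fun i =>
    (ratio2 hc hk hk1 hkc i (b + 1)).comp hp
  have hDen : ∀ m, b ≤ n m → (k (p m + (b + 1)) : ℕ) = k (n m + 1) := by
    intro m hm; congr 1; simp only [hpdef]; omega
  -- eventual inequalities
  have E1 : ∀ᶠ m in atTop, R (a + 1) m < u m := by
    have := (hR (a + 1)).eventually_lt hu (by rw [e1]; exact h1)
    exact this
  have E3 : ∀ᶠ m in atTop, u m < R (a + 3) m := by
    refine hu.eventually_lt (hR (a + 3)) ?_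
    rw [e3]
    exact lt_of_le_of_lt h2 (zpow_lt_zpow_right₀ hc (by omega))
  have E0 : ∀ᶠ m in atTop, ((k 0 : ℕ) : ℝ) < x m := hx.eventually_gt_atTop _
  -- define r and s
  refine ⟨fun m => u m / R (a + 2) m, fun m => u m / R (a + 3) m, ?_, ?_, ?_, ?_⟩
  · have hne : (c:ℝ) ^ (a + 2) / c ^ (b + 1) ≠ 0 := by positivity
    have := hu.div (hR (a + 2)) hne
    rwa [e2] at this
  · have hne : (c:ℝ) ^ (a + 3) / c ^ (b + 1) ≠ 0 := by positivity
    have := hu.div (hR (a + 3)) hne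
    rwa [e3] at this
  · filter_upwards [E1, E3, hev_b, E0] with m hm1 hm3 hmb hm0
    have hD : ((k (p m + (b + 1)) : ℕ) : ℝ) = ((k (n m + 1) : ℕ) : ℝ) := by
      exact_mod_cast hDen m hmb
    have hDpos : (0:ℝ) < (k (n m + 1) : ℝ) := kpos hk hk1 _
    have hK1 : (0:ℝ) < (k (p m + (a + 1)) : ℝ) := kpos hk hk1 _
    have hK2 : (0:ℝ) < (k (p m + (a + 2)) : ℝ) := kpos hk hk1 _
    have hK3 : (0:ℝ) < (k (p m + (a + 3)) : ℝ) := kpos hk hk1 _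
    -- lower bound: k (p m + (a+1)) < x m * y
    have hlow : ((k (p m + (a + 1)) : ℕ) : ℝ) < x m * y := by
      have := hm1
      simp only [hRdef, hudef, hD] at this
      exact (div_lt_div_iff_of_pos_right hDpos).mp this
    -- case split on x m * y ≤ k (p m + (a+2))
    by_cases hcase : x m * y ≤ ((k (p m + (a + 2)) : ℕ) : ℝ)
    · left
      have hg : γ (x m * y) = (x m * y) / (k (p m + (a + 1) + 1) : ℝ) :=
        hγ (x m * y) (p m + (a + 1)) hlow (by rw [show p m + (a + 1) + 1 = p m + (a + 2) by omega]; exact hcase)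
      rw [hg, show p m + (a + 1) + 1 = p m + (a + 2) by omega]
      simp only [hRdef, hudef, hD]
      rw [div_div_div_cancel_right₀ hDpos.ne']
    · right
      push_neg at hcase
      have hup : x m * y ≤ ((k (p m + (a + 3)) : ℕ) : ℝ) := by
        have := hm3
        simp only [hRdef, hudef, hD] at this
        exact ((div_lt_div_iff_of_pos_right hDpos).mp this).le
      have hg : γ (x m * y) = (x m * y) / (k (p m + (a + 2) + 1) : ℝ) :=
        hγ (x m * y) (p m + (a + 2)) hcase (by rw [show p m + (a + 2) + 1 = p m + (a + 3) by omega]; exact hup)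
      rw [hg, show p m + (a + 2) + 1 = p m + (a + 3) by omega]
      simp only [hRdef, hudef, hD]
      rw [div_div_div_cancel_right₀ hDpos.ne']
  · intro hstrict
    have E2 : ∀ᶠ m in atTop, u m < R (a + 2) m := by
      refine hu.eventually_lt (hR (a + 2)) ?_
      rw [e2]; exact hstrict
    filter_upwards [E1, E2, hev_b, E0] with m hm1 hm2 hmb hm0
    have hD : ((k (p m + (b + 1)) : ℕ) : ℝ) = ((k (n m + 1) : ℕ) : ℝ) := by
      exact_mod_cast hDen m hmb
    have hDpos : (0:ℝ) < (k (n m + 1) : ℝ) := kpos hk hk1 _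
    have hlow : ((k (p m + (a + 1)) : ℕ) : ℝ) < x m * y := by
      have := hm1
      simp only [hRdef, hudef, hD] at this
      exact (div_lt_div_iff_of_pos_right hDpos).mp this
    have hup : x m * y ≤ ((k (p m + (a + 2)) : ℕ) : ℝ) := by
      have := hm2
      simp only [hRdef, hudef, hD] at this
      exact ((div_lt_div_iff_of_pos_right hDpos).mp this).le
    have hg : γ (x m * y) = (x m * y) / (k (p m + (a + 1) + 1) : ℝ) :=
      hγ (x m * y) (p m + (a + 1)) hlow (by rw [show p m + (a + 1) + 1 = p m + (a + 2) by omega]; exact hup)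
    rw [hg, show p m + (a + 1) + 1 = p m + (a + 2) by omega]
    simp only [hRdef, hudef, hD]
    rw [div_div_div_cancel_right₀ hDpos.ne']

/-- Convergence case: `c^(j-1) < μ y < c^j`. -/
lemma tendsto_case {γ : ℝ → ℝ} (hc : 1 < c) (hk : StrictMono k) (hk1 : 1 ≤ k 0)
    (hkc : Filter.Tendsto (fun n => ((k (n + 1) : ℝ) / (k n : ℝ))) atTop (nhds c))
    (hγ : ∀ x : ℝ, ∀ n : ℕ, (k n : ℝ) < x → x ≤ (k (n + 1) : ℝ) → γ x = x / (k (n + 1) : ℝ))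
    (x : ℕ → ℝ) (hx : Filter.Tendsto x atTop atTop)
    (μ y : ℝ) (hy : 0 < y) (hμ : 0 < μ)
    (hγx : Filter.Tendsto (fun m => γ (x m)) atTop (nhds μ))
    (j : ℤ) (h1 : c ^ (j - 1) < μ * y) (h2 : μ * y < c ^ j) :
    Filter.Tendsto (fun m => γ (x m * y)) atTop (nhds (μ * y / c ^ j)) := by
  obtain ⟨r, s, hr, _, _, hev⟩ :=
    dichotomy hc hk hk1 hkc hγ x hx μ y hy hμ hγx j h1 h2.le
  exact hr.congr' (by filter_upwards [hev h2] with m hm using hm.symm)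

/-- Boundary case: `μ y = c^j`; cluster points are `c⁻¹` or `1`. -/
lemma boundary_case {γ : ℝ → ℝ} (hc : 1 < c) (hk : StrictMono k) (hk1 : 1 ≤ k 0)
    (hkc : Filter.Tendsto (fun n => ((k (n + 1) : ℝ) / (k n : ℝ))) atTop (nhds c))
    (hγ : ∀ x : ℝ, ∀ n : ℕ, (k n : ℝ) < x → x ≤ (k (n + 1) : ℝ) → γ x = x / (k (n + 1) : ℝ))
    (x : ℕ → ℝ) (hx : Filter.Tendsto x atTop atTop)
    (μ y : ℝ) (hy : 0 < y) (hμ : 0 < μ)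
    (hγx : Filter.Tendsto (fun m => γ (x m)) atTop (nhds μ))
    (j : ℤ) (h2 : μ * y = c ^ j) :
    ∀ L : ℝ, MapClusterPt L atTop (fun m => γ (x m * y)) → L = c⁻¹ ∨ L = 1 := by
  have hc0 : (0:ℝ) < c := lt_trans one_pos hc
  have hcne : c ≠ 0 := hc0.ne'
  have h1 : c ^ (j - 1) < μ * y := by
    rw [h2]; exact zpow_lt_zpow_right₀ hc (by omega)
  obtain ⟨r, s, hr, hs, hev, _⟩ :=
    dichotomy hc hk hk1 hkc hγ x hx μ y hy hμ hγx j h1 h2.le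
  have hr1 : Filter.Tendsto r atTop (nhds 1) := by
    rwa [h2, div_self (by positivity : (c:ℝ) ^ j ≠ 0)] at hr
  have hsc : Filter.Tendsto s atTop (nhds c⁻¹) := by
    have : μ * y / c ^ (j + 1) = c⁻¹ := by
      rw [h2, zpow_add_one₀ hcne, div_mul_eq_div_div,
        div_self (by positivity : (c:ℝ) ^ j ≠ 0), one_div]
    rwa [this] at hs
  intro L hL
  by_contra hcon
  push_neg at hcon
  obtain ⟨hLc, hL1⟩ := hcon
  set ε : ℝ := min |L - 1| |L - c⁻¹| with hεdef
  have hε : 0 < ε := by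
    apply lt_min <;> rw [abs_pos, sub_ne_zero] <;> assumption
  have hfreq : ∃ᶠ m in atTop, γ (x m * y) ∈ Metric.ball L (ε / 3) :=
    mapClusterPt_iff_frequently.mp hL _ (Metric.ball_mem_nhds L (by positivity))
  have hev2 : ∀ᶠ m in atTop, |r m - 1| < ε / 3 ∧ |s m - c⁻¹| < ε / 3 ∧
      (γ (x m * y) = r m ∨ γ (x m * y) = s m) := by
    have h1' := Metric.tendsto_atTop.mp hr1 (ε / 3) (by positivity)
    have h2' := Metric.tendsto_atTop.mp hsc (ε / 3) (by positivity)
    obtain ⟨N1, hN1⟩ := h1'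
    obtain ⟨N2, hN2⟩ := h2'
    filter_upwards [eventually_ge_atTop N1, eventually_ge_atTop N2, hev] with m hm1 hm2 hm3
    exact ⟨by simpa [Real.dist_eq] using hN1 m hm1, by simpa [Real.dist_eq] using hN2 m hm2, hm3⟩
  obtain ⟨m, hball, hrm, hsm, hcases⟩ := (hfreq.and_eventually hev2).exists
  rw [Metric.mem_ball, Real.dist_eq] at hball
  rcases hcases with h | h
  · have : |L - 1| ≤ |γ (x m * y) - L| + |r m - 1| := by
      rw [← h]
      calc |L - 1| = |-(γ (x m * y) - L) + (γ (x m * y) - 1)| := by ring_nf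
        _ ≤ |(-(γ (x m * y) - L))| + |γ (x m * y) - 1| := abs_add_le _ _
        _ = |γ (x m * y) - L| + |γ (x m * y) - 1| := by rw [abs_neg]
    have hmin : ε ≤ |L - 1| := min_le_left _ _
    linarith
  · have : |L - c⁻¹| ≤ |γ (x m * y) - L| + |s m - c⁻¹| := by
      rw [← h]
      calc |L - c⁻¹| = |-(γ (x m * y) - L) + (γ (x m * y) - c⁻¹)| := by ring_nf
        _ ≤ |(-(γ (x m * y) - L))| + |γ (x m * y) - c⁻¹| := abs_add_le _ _
        _ = |γ (x m * y) - L| + |γ (x m * y) - c⁻¹| := by rw [abs_neg]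
    have hmin : ε ≤ |L - c⁻¹| := min_le_right _ _
    linarith

lemma ceil_bounds (hc : 1 < c) (t : ℝ) (ht : 0 < t) :
    c ^ (⌈Real.log t / Real.log c⌉ - 1 : ℤ) < t ∧ t ≤ c ^ (⌈Real.log t / Real.log c⌉ : ℤ) := by
  have hc0 : (0:ℝ) < c := lt_trans one_pos hc
  have hlogb : Real.logb c t = Real.log t / Real.log c := rfl
  set J : ℤ := ⌈Real.log t / Real.log c⌉ with hJ
  have h1 : ((J:ℝ) - 1) < Real.logb c t := by
    rw [hlogb]
    have := Int.ceil_lt_add_one (Real.log t / Real.log c)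
    push_cast at this ⊢
    linarith
  have h2 : Real.logb c t ≤ (J:ℝ) := by rw [hlogb]; exact_mod_cast Int.le_ceil _
  have ht' : t = c ^ (Real.logb c t) := (Real.rpow_logb hc0 (ne_of_gt hc) ht).symm
  constructor
  · have : c ^ ((J:ℝ) - 1) < c ^ (Real.logb c t) := (Real.rpow_lt_rpow_left_iff hc).mpr h1
    rw [← ht'] at this
    calc (c:ℝ) ^ (J - 1 : ℤ) = c ^ (((J - 1 : ℤ) : ℝ)) := (Real.rpow_intCast c _).symm
      _ = c ^ ((J:ℝ) - 1) := by norm_num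
      _ < t := this
  · have : c ^ (Real.logb c t) ≤ c ^ ((J:ℝ)) := (Real.rpow_le_rpow_left_iff hc).mpr h2
    rw [← ht'] at this
    calc t ≤ c ^ ((J:ℝ)) := this
      _ = c ^ (((J:ℤ)):ℝ) := by norm_num
      _ = c ^ (J:ℤ) := Real.rpow_intCast c _

end Aux

/-- If `x_m → ∞` and the position parameters `γ(x_m)` converge circularly to
`lam ∈ (c⁻¹,1]`, then for every `y > 0`, `γ(x_m · y)` converges circularly to `h_lam(y)`. -/
theorem stmt_2 (c : ℝ) (hc : 1 < c)
    (k : ℕ → ℕ) (hk : StrictMono k) (hk1 : 1 ≤ k 0)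
    (hkc : Filter.Tendsto (fun n => ((k (n + 1) : ℝ) / (k n : ℝ))) Filter.atTop (nhds c))
    (γ : ℝ → ℝ)
    (hγ : ∀ x : ℝ, ∀ n : ℕ, (k n : ℝ) < x → x ≤ (k (n + 1) : ℝ) → γ x = x / (k (n + 1) : ℝ))
    (hγ0 : ∀ x : ℝ, 0 < x → x ≤ (k 0 : ℝ) → γ x = x / (k 0 : ℝ))
    (x : ℕ → ℝ) (hx : Filter.Tendsto x Filter.atTop Filter.atTop)
    (lam : ℝ) (hlam : lam ∈ Set.Ioc c⁻¹ 1)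
    (hcir : CirTendsto c (fun m => γ (x m)) lam) :
    ∀ y > (0 : ℝ), CirTendsto c (fun m => γ (x m * y)) (hFun c lam y) := by
  intro y hy
  have hc0 : (0:ℝ) < c := lt_trans one_pos hc
  have hcne : c ≠ 0 := hc0.ne'
  have hcinv : (0:ℝ) < c⁻¹ := by positivity
  have hlam0 : 0 < lam := lt_trans hcinv hlam.1
  have ht : 0 < lam * y := mul_pos hlam0 hy
  obtain ⟨hb1, hb2⟩ := ceil_bounds hc (lam * y) ht
  set J : ℤ := ⌈Real.log (lam * y) / Real.log c⌉ with hJ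
  have hFuneq : hFun c lam y = lam * y / c ^ J := rfl
  -- helper: membership of the limit in Ioo when strict
  have hmemIoo : lam * y < c ^ J → lam * y / c ^ J ∈ Set.Ioo c⁻¹ 1 := by
    intro hlt
    have hJpos : (0:ℝ) < c ^ J := by positivity
    constructor
    · rw [lt_div_iff₀ hJpos]
      calc c⁻¹ * c ^ J = c ^ (J - 1) := by
            rw [zpow_sub_one₀ hcne]; ring
        _ < lam * y := hb1
    · rw [div_lt_one hJpos]; exact hlt
  rcases hcir with ⟨hlam', htend⟩ | ⟨hlam1, hclus⟩
  · -- lam ∈ Ioo c⁻¹ 1 and γ(x_m) → lam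
    rcases lt_or_eq_of_le hb2 with hlt | heq
    · left
      refine ⟨hFuneq ▸ hmemIoo hlt, ?_⟩
      rw [hFuneq]
      exact tendsto_case hc hk hk1 hkc hγ x hx lam y hy hlam0 htend J hb1 hlt
    · right
      refine ⟨by rw [hFuneq, heq, div_self (by positivity : (c:ℝ) ^ J ≠ 0)], ?_⟩
      rw [hFuneq] at *
      exact boundary_case hc hk hk1 hkc hγ x hx lam y hy hlam0 htend J heq
  · -- lam = 1
    subst hlam1
    rw [one_mul] at hb1 hb2 ht
    have key : ∀ (ns : ℕ → ℕ), Filter.Tendsto ns atTop atTop →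
        ∃ (φ : ℕ → ℕ) (μ : ℝ), (μ = c⁻¹ ∨ μ = 1) ∧ StrictMono φ ∧
          Filter.Tendsto (fun n => γ (x (ns (φ n)))) atTop (nhds μ) := by
      intro ns hns
      have hxy : Filter.Tendsto (fun n => x (ns n)) atTop atTop := hx.comp hns
      set g : ℕ → ℝ := fun n => min 1 (max 0 (γ (x (ns n)))) with hgdef
      have hg : ∀ n, g n ∈ Set.Icc (0:ℝ) 1 := fun n =>
        ⟨le_min zero_le_one (le_max_left _ _), min_le_left _ _⟩
      obtain ⟨μ, hμmem, φ, hφ, hgφ⟩ := isCompact_Icc.tendsto_subseq hg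
      have hxyφ : Filter.Tendsto (fun n => x (ns (φ n))) atTop atTop :=
        hxy.comp hφ.tendsto_atTop
      have heq' : ∀ᶠ n in atTop, g (φ n) = γ (x (ns (φ n))) := by
        filter_upwards [hxyφ.eventually_gt_atTop 0] with n hn
        obtain ⟨hg0, hg1⟩ := gamma_mem hγ hγ0 hk hk1 _ hn
        simp only [hgdef]
        rw [max_eq_right hg0, min_eq_right hg1]
      have hγφ : Filter.Tendsto (fun n => γ (x (ns (φ n)))) atTop (nhds μ) :=
        hgφ.congr' heq'
      have hclusμ : MapClusterPt μ atTop (fun m => γ (x m)) :=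
        MapClusterPt.of_comp (hns.comp hφ.tendsto_atTop) hγφ.mapClusterPt
      exact ⟨φ, μ, hclus μ hclusμ, hφ, hγφ⟩
    rcases lt_or_eq_of_le hb2 with hlt | heq
    · -- y is not a power of c: convergence to y / c^J ∈ Ioo c⁻¹ 1
      left
      have hmem : y / c ^ J ∈ Set.Ioo c⁻¹ 1 := by
        have := hmemIoo (by rwa [one_mul]); rwa [one_mul] at this
      refine ⟨by rw [hFuneq, one_mul]; exact hmem, ?_⟩
      rw [hFuneq, one_mul]
      apply tendsto_of_subseq_tendsto
      intro ns hns
      obtain ⟨φ, μ, hμor, hφ, hγφ⟩ := key ns hns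
      have hxyφ : Filter.Tendsto (fun n => x (ns (φ n))) atTop atTop :=
        (hx.comp hns).comp hφ.tendsto_atTop
      refine ⟨φ, ?_⟩
      rcases hμor with hμ | hμ
      · -- μ = c⁻¹, use j = J - 1
        subst hμ
        have hb1' : c ^ (J - 1 - 1) < c⁻¹ * y := by
          have hkey : c ^ (J - 1 : ℤ) = c * c ^ (J - 1 - 1 : ℤ) := by
            rw [mul_comm, ← zpow_add_one₀ hcne]; congr 1; ring
          rw [hkey] at hb1
          rw [inv_mul_eq_div, lt_div_iff₀ hc0]
          linarith [hb1]
        have hb2' : c⁻¹ * y < c ^ (J - 1 : ℤ) := by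
          have hkey : c ^ (J : ℤ) = c * c ^ (J - 1 : ℤ) := by
            rw [mul_comm, ← zpow_add_one₀ hcne]; congr 1; ring
          rw [hkey] at hlt
          rw [inv_mul_eq_div, div_lt_iff₀ hc0]
          linarith [hlt]
        have := tendsto_case hc hk hk1 hkc hγ _ hxyφ c⁻¹ y hy hcinv hγφ (J - 1) hb1' hb2'
        have heq2 : c⁻¹ * y / c ^ (J - 1 : ℤ) = y / c ^ J := by
          rw [zpow_sub_one₀ hcne]
          field_simp
        rwa [heq2] at this
      · subst hμ
        have := tendsto_case hc hk hk1 hkc hγ _ hxyφ 1 y hy one_pos hγφ J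
          (by rwa [one_mul]) (by rwa [one_mul])
        rwa [one_mul] at this
    · -- y = c^J: boundary
      right
      refine ⟨by rw [hFuneq, one_mul, heq, div_self (by positivity : (c:ℝ) ^ J ≠ 0)], ?_⟩
      intro L hL
      obtain ⟨θ, hθ, hvθ⟩ := subseq_tendsto_of_neBot (f := nhds L) hL
      obtain ⟨φ, μ, hμor, hφ, hγφ⟩ := key θ hθ.tendsto_atTop
      have hxyφ : Filter.Tendsto (fun n => x (θ (φ n))) atTop atTop :=
        (hx.comp hθ.tendsto_atTop).comp hφ.tendsto_atTop
      have hLnew : MapClusterPt L atTop (fun n => γ (x (θ (φ n)) * y)) := by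
        have : Filter.Tendsto (fun n => γ (x (θ (φ n)) * y)) atTop (nhds L) :=
          hvθ.comp hφ.tendsto_atTop
        exact this.mapClusterPt
      rcases hμor with hμ | hμ
      · subst hμ
        have h2' : c⁻¹ * y = c ^ (J - 1 : ℤ) := by
          rw [heq, zpow_sub_one₀ hcne]; ring
        exact boundary_case hc hk hk1 hkc hγ _ hxyφ c⁻¹ y hy hcinv hγφ (J - 1) h2' L hLnew
      · subst hμ
        exact boundary_case hc hk hk1 hkc hγ _ hxyφ 1 y hy one_pos hγφ J
          (by rwa [one_mul]) L hLnew
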